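/- Let a, b ∈ ℝ and n ∈ ℕ. Then the n-th derivative at s = 0 of the function s ↦ exp(a·s + (1/2)·b·s²) equals Σ_{j=0}^{⌊n/2⌋} n! / ((n-2j)! · j! · 2^j) · a^{n-2j} · b^j. (This is the contraction with t^{⊗n} of the paper's formula for the n-th order moments of a multivariate normal distribution with mean μ and covariance Σ, where a = t'μ and b = t'Σt.) -/

import Mathlib

open Finset

noncomputable def cc (n j : ℕ) : ℝ :=
  if 2 * j ≤ n then
    (n.factorial : ℝ) / (((n - 2 * j).factorial : ℝ) * (j.factorial : ℝ) * 2 ^ j)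
  else 0

lemma cc_zero (n : ℕ) : cc n 0 = 1 := by
  rw [cc, if_pos (by omega)]
  simp [Nat.factorial_ne_zero]

lemma cc_top (n : ℕ) : cc n (n + 1) = 0 := by
  rw [cc, if_neg (by omega)]

lemma cc_step (n k : ℕ) (u b : ℝ) :
    cc (n+1) (k+1) * u ^ (n+1-2*(k+1)) * b^(k+1) =
    cc n k * ((↑(n-2*k) : ℝ) * u ^ (n-2*k-1) * b) * b^k
      + u * (cc n (k+1) * u ^ (n-2*(k+1)) * b^(k+1)) := by
  by_cases h1 : n ≤ 2*k
  · have e0 : (n - 2*k : ℕ) = 0 := by omega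
    have e1 : cc (n+1) (k+1) = 0 := by rw [cc, if_neg (by omega)]
    have e2 : cc n (k+1) = 0 := by rw [cc, if_neg (by omega)]
    simp [e0, e1, e2]
  · by_cases h2 : n = 2*k+1
    · subst h2
      simp only [cc]
      rw [if_pos (show 2*(k+1) ≤ 2*k+1+1 by omega),
          if_pos (show 2*k ≤ 2*k+1 by omega),
          if_neg (show ¬ 2*(k+1) ≤ 2*k+1 by omega)]
      simp only [show 2*k+1+1-2*(k+1) = 0 from by omega,
        show 2*k+1-2*k = 1 from by omega, show (1:ℕ)-1 = 0 from rfl,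
        show 2*k+1+1 = (2*k+1)+1 from rfl, Nat.factorial_succ, Nat.factorial_zero,
        Nat.factorial_one]
      have h01 : ((2*k+1).factorial : ℝ) ≠ 0 := Nat.cast_ne_zero.mpr (Nat.factorial_ne_zero _)
      have h02 : ((k).factorial : ℝ) ≠ 0 := Nat.cast_ne_zero.mpr (Nat.factorial_ne_zero _)
      push_cast
      field_simp
      ring
    · obtain ⟨m, rfl⟩ : ∃ m, n = 2*k + (m+2) := ⟨n - 2*k - 2, by omega⟩
      simp only [cc]
      rw [if_pos (show 2*(k+1) ≤ 2*k+(m+2)+1 by omega),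
          if_pos (show 2*k ≤ 2*k+(m+2) by omega),
          if_pos (show 2*(k+1) ≤ 2*k+(m+2) by omega)]
      simp only [show 2*k+(m+2)+1-2*(k+1) = m+1 from by omega,
        show 2*k+(m+2)-2*k = m+2 from by omega,
        show (m+2)-1 = m+1 from by omega,
        show 2*k+(m+2)-2*(k+1) = m from by omega,
        show 2*k+(m+2)+1 = (2*k+(m+2))+1 from rfl,
        show (m+2) = (m+1)+1 from rfl,
        Nat.factorial_succ]
      have h01 : ((2*k+(m+1+1)).factorial : ℝ) ≠ 0 := Nat.cast_ne_zero.mpr (Nat.factorial_ne_zero _)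
      have h02 : ((k).factorial : ℝ) ≠ 0 := Nat.cast_ne_zero.mpr (Nat.factorial_ne_zero _)
      have h03 : ((m).factorial : ℝ) ≠ 0 := Nat.cast_ne_zero.mpr (Nat.factorial_ne_zero _)
      have hu : u ^ (m+1) = u * u ^ m := by ring
      push_cast
      field_simp
      ring

lemma key (n : ℕ) (u b : ℝ) :
    (∑ j ∈ range (n+1), cc n j * ((↑(n-2*j) : ℝ) * u^(n-2*j-1) * b) * b^j)
      + u * ∑ j ∈ range (n+1), cc n j * u^(n-2*j) * b^j
    = ∑ j ∈ range (n+2), cc (n+1) j * u^(n+1-2*j) * b^j := by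
  rw [Finset.sum_range_succ' (fun j => cc (n+1) j * u^(n+1-2*j) * b^j) (n+1)]
  have h1 : ∀ j ∈ range (n+1),
      cc (n+1) (j+1) * u^(n+1-2*(j+1)) * b^(j+1)
      = cc n j * ((↑(n-2*j) : ℝ) * u^(n-2*j-1) * b) * b^j
        + u * (cc n (j+1) * u^(n-2*(j+1)) * b^(j+1)) := fun j _ => cc_step n j u b
  rw [Finset.sum_congr rfl h1, Finset.sum_add_distrib]
  have h2 : ∑ j ∈ range (n+1), u * (cc n (j+1) * u^(n-2*(j+1)) * b^(j+1))
      = u * ∑ j ∈ range (n+1), cc n (j+1) * u^(n-2*(j+1)) * b^(j+1) := by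
    rw [Finset.mul_sum]
  have h3 : ∑ j ∈ range (n+1), cc n j * u^(n-2*j) * b^j
      = (∑ j ∈ range (n+1), cc n (j+1) * u^(n-2*(j+1)) * b^(j+1))
        + cc n 0 * u^(n-2*0) * b^0 := by
    have := Finset.sum_range_succ' (fun j => cc n j * u^(n-2*j) * b^j) (n+1)
    rw [Finset.sum_range_succ (fun j => cc n ((j:ℕ)+1) * u^(n-2*((j:ℕ)+1)) * b^((j:ℕ)+1)) n] at this ⊢
    · rw [Finset.sum_range_succ (fun j => cc n j * u^(n-2*j) * b^j) (n+1)] at this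
      simp [cc_top n] at this ⊢
      linarith [this]
  rw [h2, h3]
  have h0 : cc (n+1) 0 * u^(n+1-2*0) * b^0 = u * (cc n 0 * u^(n-2*0) * b^0) := by
    simp [cc_zero]
    ring
  rw [h0]
  ring

lemma main_lemma (a b : ℝ) (n : ℕ) (s : ℝ) :
    iteratedDeriv n (fun s : ℝ => Real.exp (a * s + 1 / 2 * b * s ^ 2)) s
    = (∑ j ∈ range (n+1), cc n j * (a + b*s)^(n-2*j) * b^j)
        * Real.exp (a * s + 1 / 2 * b * s ^ 2) := by
  induction n generalizing s with
  | zero => simp [cc_zero]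
  | succ n ih =>
    rw [iteratedDeriv_succ]
    have hfun : iteratedDeriv n (fun s : ℝ => Real.exp (a * s + 1 / 2 * b * s ^ 2))
        = fun s => (∑ j ∈ range (n+1), cc n j * (a + b*s)^(n-2*j) * b^j)
            * Real.exp (a * s + 1 / 2 * b * s ^ 2) := funext ih
    rw [hfun]
    have hf : HasDerivAt (fun s : ℝ => Real.exp (a * s + 1 / 2 * b * s ^ 2))
        ((a + b*s) * Real.exp (a * s + 1 / 2 * b * s ^ 2)) s := by
      have h1 : HasDerivAt (fun s : ℝ => a * s + 1 / 2 * b * s ^ 2)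
          (a + b * s) s := by
        have ha : HasDerivAt (fun s : ℝ => a * s) a s := by
          simpa using (hasDerivAt_id s).const_mul a
        have hb : HasDerivAt (fun s : ℝ => 1 / 2 * b * s ^ 2) (1/2*b*(2*s^1)) s := by
          exact (hasDerivAt_pow 2 s).const_mul (1/2*b)
        have := ha.fun_add hb
        exact this.congr_deriv (by ring)
      have := h1.exp
      convert this using 1
      ring
    have hQ : HasDerivAt (fun s : ℝ => ∑ j ∈ range (n+1), cc n j * (a + b*s)^(n-2*j) * b^j)
        (∑ j ∈ range (n+1), cc n j * ((↑(n-2*j) : ℝ) * (a + b*s)^(n-2*j-1) * b) * b^j) s := by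
      apply HasDerivAt.fun_sum
      intro j _
      have hu : HasDerivAt (fun s : ℝ => a + b * s) b s := by
        simpa using ((hasDerivAt_id s).const_mul b).const_add a
      have := ((hu.fun_pow (n-2*j)).const_mul (cc n j)).mul_const (b^j)
      convert this using 1
    rw [(hQ.fun_mul hf).deriv]
    rw [← key n (a+b*s) b]
    ring

/-- The `n`-th derivative at `s = 0` of `s ↦ exp(a s + b s²/2)` equals
`∑_{j=0}^{⌊n/2⌋} n!/((n-2j)! j! 2^j) a^{n-2j} b^j`.  (This is the contraction
with `t^{⊗n}` of the formula for the `n`-th moments of a multivariate normal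
distribution with mean `μ` and covariance `Σ`, where `a = t'μ`, `b = t'Σt`.) -/
theorem normal_moment_scalar (a b : ℝ) (n : ℕ) :
    iteratedDeriv n (fun s : ℝ => Real.exp (a * s + 1 / 2 * b * s ^ 2)) 0 =
      ∑ j ∈ Finset.range (n / 2 + 1),
        (n.factorial : ℝ) /
            (((n - 2 * j).factorial : ℝ) * (j.factorial : ℝ) * 2 ^ j) *
          a ^ (n - 2 * j) * b ^ j := by
  rw [main_lemma a b n 0]
  norm_num
  rw [← Finset.sum_subset
      (show range (n/2+1) ⊆ range (n+1) by
        intro x hx; simp only [Finset.mem_range] at hx ⊢; omega)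
      (fun x hx hnx => by
        rw [cc, if_neg (by simp only [Finset.mem_range] at hx hnx; omega)]
        ring)]
  apply Finset.sum_congr rfl
  intro j hj
  rw [cc, if_pos (by simp only [Finset.mem_range] at hj; omega)]
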